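/- arXiv:1206.6354 — 2 statements merged into one kernel-verified Lean document; each statement's English description precedes it below -/
import Mathlib

section
/- For every integer m ≥ 1 and every integer ℓ ≥ 0, r_{m,ℓ} = ∑_{k=0}^{ℓ} C(ℓ,k) · r_k · r_{m-1, ℓ-k}, where C(ℓ,k) is the binomial coefficient. -/
/-- `IsBPA m ℓ f` : `f` encodes a barred preferential arrangement of `[ℓ]` with `m` bars.
Each element of `[ℓ]` is assigned a section (one of the `m + 1` sections determined by the
`m` bars) together with a rank inside its section (ties are allowed: elements of the same
section with the same rank form a block); within each section the set of ranks actually used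
must be an initial segment `{0, …, t-1}`, so that `f` determines, for each section, an
ordered partition of the elements assigned to it into nonempty blocks. -/
def IsBPA (m ℓ : ℕ) (f : Fin ℓ → Fin (m + 1) × Fin ℓ) : Prop :=
  ∀ x : Fin ℓ, ∀ r : Fin ℓ, r < (f x).2 → ∃ y : Fin ℓ, (f y).1 = (f x).1 ∧ (f y).2 = r

instance (m ℓ : ℕ) : DecidablePred (IsBPA m ℓ) := fun f => by unfold IsBPA; infer_instance

/-- `bpa m ℓ` : the number of barred preferential arrangements of `[ℓ]` with `m` bars.
In particular `bpa 0 ℓ` is the number of preferential arrangements of `[ℓ]`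
(the Fubini / ordered Bell number `r_ℓ`). -/
def bpa (m ℓ : ℕ) : ℕ :=
  Fintype.card { f : Fin ℓ → Fin (m + 1) × Fin ℓ // IsBPA m ℓ f }

def OK (M L : ℕ) {α : Type} (f : α → Fin M × Fin L) : Prop :=
  ∀ x, ∀ r : Fin L, r < (f x).2 → ∃ y, (f y).1 = (f x).1 ∧ (f y).2 = r

instance (M L : ℕ) {α : Type} [Fintype α] [DecidableEq α] :
    DecidablePred (OK M L (α := α)) := fun f => by unfold OK; infer_instance

lemma OK.rank_lt {M L : ℕ} {α : Type} [Fintype α] {f : α → Fin M × Fin L}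
    (hf : OK M L f) (x : α) : ((f x).2 : ℕ) < Fintype.card α := by
  have hφ : ∀ i : Fin (((f x).2 : ℕ) + 1), ∃ y : α, ((f y).2 : ℕ) = i := by
    intro i
    rcases lt_or_eq_of_le (Nat.lt_succ_iff.mp i.isLt) with h | h
    · obtain ⟨y, -, hy2⟩ := hf x ⟨i, lt_trans h (f x).2.isLt⟩ h
      exact ⟨y, by rw [hy2]⟩
    · exact ⟨x, h.symm⟩
  choose φ hφ using hφ
  have hinj : Function.Injective φ := fun i j hij =>
    Fin.ext (by rw [← hφ i, ← hφ j, hij])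
  simpa using Fintype.card_le_of_injective φ hinj

def OK.relabel {M L : ℕ} {α β : Type} (e : α ≃ β) :
    {f : α → Fin M × Fin L // OK M L f} ≃ {f : β → Fin M × Fin L // OK M L f} where
  toFun f := ⟨f.1 ∘ e.symm, by
    intro x r hr
    obtain ⟨y, h1, h2⟩ := f.2 (e.symm x) r hr
    exact ⟨e y, by simpa using h1, by simpa using h2⟩⟩
  invFun f := ⟨f.1 ∘ e, by
    intro x r hr
    obtain ⟨y, h1, h2⟩ := f.2 (e x) r hr
    exact ⟨e.symm y, by simpa using h1, by simpa using h2⟩⟩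
  left_inv f := Subtype.ext (funext fun x => by simp)
  right_inv f := Subtype.ext (funext fun x => by simp)

def OK.truncate {M L : ℕ} {α : Type} [Fintype α] (h : Fintype.card α ≤ L) :
    {f : α → Fin M × Fin L // OK M L f} ≃
      {f : α → Fin M × Fin (Fintype.card α) // OK M (Fintype.card α) f} where
  toFun f := ⟨fun x => ((f.1 x).1, ⟨((f.1 x).2 : ℕ), f.2.rank_lt x⟩), by
    intro x r hr
    obtain ⟨y, h1, h2⟩ := f.2 x (Fin.castLE h r) (by simpa [Fin.lt_def] using hr)
    exact ⟨y, h1, Fin.ext (by simp [h2])⟩⟩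
  invFun g := ⟨fun x => ((g.1 x).1, Fin.castLE h (g.1 x).2), by
    intro x r hr
    have hr' : (r : ℕ) < ((g.1 x).2 : ℕ) := by simpa [Fin.lt_def] using hr
    obtain ⟨y, h1, h2⟩ := g.2 x ⟨(r : ℕ), lt_trans hr' (g.1 x).2.isLt⟩ hr'
    exact ⟨y, h1, Fin.ext (by simp [h2])⟩⟩
  left_inv f := Subtype.ext (funext fun x => Prod.ext rfl (Fin.ext rfl))
  right_inv g := Subtype.ext (funext fun x => Prod.ext rfl (Fin.ext rfl))


lemma card_OK {M L : ℕ} {α : Type} [Fintype α] [DecidableEq α] (h : Fintype.card α ≤ L) :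
    Fintype.card {f : α → Fin (M + 1) × Fin L // OK (M + 1) L f} = bpa M (Fintype.card α) := by
  rw [bpa]
  exact Fintype.card_congr (((OK.truncate h).trans (OK.relabel (Fintype.equivFin α))).trans
    (Equiv.subtypeEquivRight fun f => Iff.rfl))

def fiberEquiv (n ℓ : ℕ) (s : Finset (Fin ℓ)) :
    {f : Fin ℓ → Fin (n + 2) × Fin ℓ //
        OK (n + 2) ℓ f ∧ ∀ x, (f x).1 = 0 ↔ x ∈ s} ≃
      {g : {x : Fin ℓ // x ∈ s} → Fin 1 × Fin ℓ // OK 1 ℓ g} ×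
        {h : {x : Fin ℓ // x ∉ s} → Fin (n + 1) × Fin ℓ // OK (n + 1) ℓ h} where
  toFun f :=
    ⟨⟨fun x => (0, (f.1 x.1).2), by
        intro x r hr
        obtain ⟨y, h1, h2⟩ := f.2.1 x.1 r hr
        have hy : y ∈ s := (f.2.2 y).1 (h1.trans ((f.2.2 x.1).2 x.2))
        exact ⟨⟨y, hy⟩, Subsingleton.elim _ _, h2⟩⟩,
      ⟨fun x => ((f.1 x.1).1.pred (fun h0 => x.2 ((f.2.2 x.1).1 h0)), (f.1 x.1).2), by
        intro x r hr
        obtain ⟨y, h1, h2⟩ := f.2.1 x.1 r hr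
        have hx0 : (f.1 x.1).1 ≠ 0 := fun h0 => x.2 ((f.2.2 x.1).1 h0)
        have hy : y ∉ s := fun hy => hx0 (h1.symm.trans ((f.2.2 y).2 hy))
        exact ⟨⟨y, hy⟩, Fin.ext (by simp [Fin.coe_pred, h1]), h2⟩⟩⟩
  invFun gh :=
    ⟨fun x => if hx : x ∈ s then ((0 : Fin (n + 2)), (gh.1.1 ⟨x, hx⟩).2)
      else ((gh.2.1 ⟨x, hx⟩).1.succ, (gh.2.1 ⟨x, hx⟩).2), by
      constructor
      · intro x r hr
        by_cases hx : x ∈ s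
        · simp only [dif_pos hx] at hr ⊢
          obtain ⟨y, h1, h2⟩ := gh.1.2 ⟨x, hx⟩ r hr
          exact ⟨y.1, by simp [dif_pos y.2], by simp [dif_pos y.2, h2]⟩
        · simp only [dif_neg hx] at hr ⊢
          obtain ⟨y, h1, h2⟩ := gh.2.2 ⟨x, hx⟩ r hr
          exact ⟨y.1, by simp [dif_neg y.2, h1], by simp [dif_neg y.2, h2]⟩
      · intro x
        by_cases hx : x ∈ s
        · simp [dif_pos hx, hx]
        · simp [dif_neg hx, hx, Fin.succ_ne_zero]⟩
  left_inv f := Subtype.ext (funext fun x => by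
    by_cases hx : x ∈ s
    · have h0 : (f.1 x).1 = 0 := (f.2.2 x).2 hx
      simp only [dif_pos hx]
      exact Prod.ext h0.symm rfl
    · simp only [dif_neg hx]
      exact Prod.ext (Fin.succ_pred _ (fun h0 => hx ((f.2.2 x).1 h0))) rfl)
  right_inv gh := by
    refine Prod.ext (Subtype.ext (funext fun x => ?_)) (Subtype.ext (funext fun x => ?_))
    · simp only [dif_pos x.2]
      exact Prod.ext (Subsingleton.elim _ _) rfl
    · simp only [dif_neg x.2]
      exact Prod.ext (Fin.pred_succ _ (h := Fin.succ_ne_zero _)) rfl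

/-- For every `m ≥ 1` and `ℓ ≥ 0`,
`r_{m,ℓ} = ∑_{k=0}^{ℓ} C(ℓ,k) · r_k · r_{m-1, ℓ-k}`. -/
theorem bpa_eq_binomial_convolution (m ℓ : ℕ) (hm : 1 ≤ m) :
    bpa m ℓ = ∑ k ∈ Finset.range (ℓ + 1), Nat.choose ℓ k * bpa 0 k * bpa (m - 1) (ℓ - k) := by
  obtain ⟨n, rfl⟩ : ∃ n, m = n + 1 := ⟨m - 1, (Nat.succ_pred_eq_of_pos hm).symm⟩
  simp only [Nat.add_sub_cancel]
  have h1 : bpa (n + 1) ℓ =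
      Fintype.card {f : Fin ℓ → Fin (n + 2) × Fin ℓ // OK (n + 2) ℓ f} :=
    Fintype.card_congr (Equiv.subtypeEquivRight fun f => Iff.rfl)
  set Z : {f : Fin ℓ → Fin (n + 2) × Fin ℓ // OK (n + 2) ℓ f} → Finset (Fin ℓ) :=
    fun f => Finset.univ.filter (fun x => (f.1 x).1 = 0) with hZ
  have h2 : Fintype.card {f : Fin ℓ → Fin (n + 2) × Fin ℓ // OK (n + 2) ℓ f} =
      ∑ s : Finset (Fin ℓ), (Finset.univ.filter (fun f => Z f = s)).card := by
    rw [← Finset.card_univ]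
    exact Finset.card_eq_sum_card_fiberwise (fun x _ => Finset.mem_univ _)
  have h3 : ∀ s : Finset (Fin ℓ),
      (Finset.univ.filter (fun f => Z f = s)).card = bpa 0 s.card * bpa n (ℓ - s.card) := by
    intro s
    rw [← Fintype.card_subtype]
    have e1 : {f : {f : Fin ℓ → Fin (n + 2) × Fin ℓ // OK (n + 2) ℓ f} // Z f = s} ≃
        {f : Fin ℓ → Fin (n + 2) × Fin ℓ //
          OK (n + 2) ℓ f ∧ ∀ x, (f x).1 = 0 ↔ x ∈ s} :=
      (Equiv.subtypeEquivRight (fun f => by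
        simp [hZ, Finset.ext_iff])).trans (Equiv.subtypeSubtypeEquivSubtypeInter _ _)
    rw [Fintype.card_congr (e1.trans (fiberEquiv n ℓ s)), Fintype.card_prod]
    have hs : Fintype.card {x : Fin ℓ // x ∈ s} ≤ ℓ := by
      rw [Fintype.card_coe]
      exact le_trans (Finset.card_le_univ s) (by simp)
    have hc : Fintype.card {x : Fin ℓ // x ∉ s} ≤ ℓ := by
      rw [Fintype.card_subtype_compl]
      exact Nat.sub_le _ _ |>.trans (by simp)
    rw [card_OK hs, card_OK hc, Fintype.card_coe, Fintype.card_subtype_compl,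
      Fintype.card_coe, Fintype.card_fin]
  rw [h1, h2]
  simp only [h3]
  rw [← Finset.powerset_univ,
    Finset.sum_powerset_apply_card (fun k => bpa 0 k * bpa n (ℓ - k))]
  simp [Finset.card_univ, mul_assoc]
end

section
/- For every integer m ≥ 0 and every complex number z with |z| < log 2, the series ∑_{ℓ ≥ 0} r_{m,ℓ} · z^ℓ / ℓ! converges and its sum equals 1/(2 - e^z)^{m+1}. -/
open Finset

section Comb

variable {α β : Type*}

/-- `ℕ`-rank version of `IsBPA` over an arbitrary domain. -/
def IsBPAN (m : ℕ) (f : α → Fin (m + 1) × ℕ) : Prop :=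
  ∀ x, ∀ r : ℕ, r < (f x).2 → ∃ y, (f y).1 = (f x).1 ∧ (f y).2 = r

def BPAFun (m : ℕ) (α : Type*) := { f : α → Fin (m + 1) × ℕ // IsBPAN m f }

lemma fin_one_eq (a b : Fin (0 + 1)) : a = b :=
  Fin.ext (by have := a.2; have := b.2; omega)

lemma BPAFun.rank_lt [Fintype α] {m : ℕ} (f : BPAFun m α) (x : α) :
    (f.1 x).2 < Fintype.card α := by
  have h : ∀ r : Fin ((f.1 x).2 + 1), ∃ y, (f.1 y).1 = (f.1 x).1 ∧ (f.1 y).2 = r := by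
    intro r
    rcases lt_or_eq_of_le (Nat.lt_succ_iff.mp r.2) with h | h
    · exact f.2 x r h
    · exact ⟨x, rfl, h.symm⟩
  choose g hg1 hg2 using h
  have hinj : Function.Injective g := by
    intro a b hab
    have : (a : ℕ) = b := by rw [← hg2 a, ← hg2 b, hab]
    exact Fin.ext this
  simpa using Fintype.card_le_of_injective g hinj

instance BPAFun.finite [Fintype α] (m : ℕ) : Finite (BPAFun m α) := by
  classical
  refine Finite.of_injective
    (fun f : BPAFun m α => fun x => ((f.1 x).1, (⟨(f.1 x).2, Nat.lt_succ_of_lt (f.rank_lt x)⟩ :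
      Fin (Fintype.card α + 1)))) ?_
  intro f g h
  apply Subtype.ext; funext x
  have h1 := congrArg (fun F => (F x).1) h
  have h2 := congrArg (fun F => ((F x).2 : ℕ)) h
  simp only at h1 h2
  exact Prod.ext h1 h2

def bpaEquiv (m ℓ : ℕ) :
    { f : Fin ℓ → Fin (m + 1) × Fin ℓ // IsBPA m ℓ f } ≃ BPAFun m (Fin ℓ) where
  toFun f := ⟨fun x => ((f.1 x).1, ((f.1 x).2 : ℕ)), by
    intro x r hr
    obtain ⟨y, hy1, hy2⟩ := f.2 x ⟨r, hr.trans (f.1 x).2.2⟩ hr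
    exact ⟨y, hy1, congrArg Fin.val hy2⟩⟩
  invFun g := ⟨fun x => ((g.1 x).1, ⟨(g.1 x).2, by simpa using g.rank_lt x⟩), by
    intro x r hr
    obtain ⟨y, hy1, hy2⟩ := g.2 x r hr
    exact ⟨y, hy1, Fin.ext hy2⟩⟩
  left_inv f := by apply Subtype.ext; funext x; rfl
  right_inv g := by apply Subtype.ext; funext x; rfl

lemma bpa_eq_natCard (m ℓ : ℕ) : bpa m ℓ = Nat.card (BPAFun m (Fin ℓ)) := by
  rw [bpa, ← Nat.card_eq_fintype_card]
  exact Nat.card_congr (bpaEquiv m ℓ)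

def BPAFun.domCongr {m : ℕ} (e : α ≃ β) : BPAFun m α ≃ BPAFun m β where
  toFun f := ⟨fun x => f.1 (e.symm x), by
    intro x r hr
    obtain ⟨y, hy1, hy2⟩ := f.2 (e.symm x) r hr
    exact ⟨e y, by simpa using hy1, by simpa using hy2⟩⟩
  invFun f := ⟨fun x => f.1 (e x), by
    intro x r hr
    obtain ⟨y, hy1, hy2⟩ := f.2 (e x) r hr
    exact ⟨e.symm y, by simpa using hy1, by simpa using hy2⟩⟩
  left_inv f := by apply Subtype.ext; funext x; simp
  right_inv f := by apply Subtype.ext; funext x; simp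

lemma natCard_BPAFun [Fintype α] (m : ℕ) :
    Nat.card (BPAFun m α) = bpa m (Fintype.card α) := by
  rw [bpa_eq_natCard]
  exact Nat.card_congr (BPAFun.domCongr (Fintype.equivFin α))

lemma bpa_zero_right (m : ℕ) : bpa m 0 = 1 := by
  rw [bpa, Fintype.card_eq_one_iff]
  exact ⟨⟨fun x => x.elim0, fun x => x.elim0⟩, fun f => Subtype.ext (funext fun x => x.elim0)⟩

section Split

variable [Fintype α] [DecidableEq α] {m : ℕ} {S : Finset α}

/-- the set of elements in the last section -/
def secLast (m : ℕ) (f : BPAFun (m + 1) α) : Finset α :=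
  univ.filter (fun x => (f.1 x).1 = Fin.last (m + 1))

omit [DecidableEq α] in
lemma mem_secLast {f : BPAFun (m + 1) α} {x : α} :
    x ∈ secLast m f ↔ (f.1 x).1 = Fin.last (m + 1) := by
  simp [secLast]

omit [DecidableEq α] in
lemma secLast_eq_last {f : BPAFun (m + 1) α} (hf : secLast m f = S) {x : α} (hx : x ∈ S) :
    (f.1 x).1 = Fin.last (m + 1) :=
  mem_secLast.mp (hf.symm ▸ hx)

omit [DecidableEq α] in
lemma secLast_ne_last {f : BPAFun (m + 1) α} (hf : secLast m f = S) {x : α} (hx : x ∉ S) :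
    (f.1 x).1 ≠ Fin.last (m + 1) :=
  fun h => hx (hf ▸ mem_secLast.mpr h)

variable (m S) in
def glue (g : BPAFun 0 { x : α // x ∈ S }) (h : BPAFun m { x : α // x ∉ S }) :
    α → Fin (m + 2) × ℕ := fun x =>
  if hx : x ∈ S then (Fin.last (m + 1), (g.1 ⟨x, hx⟩).2)
  else ((h.1 ⟨x, hx⟩).1.castSucc, (h.1 ⟨x, hx⟩).2)

lemma glue_mem {g h} {x : α} (hx : x ∈ S) :
    glue m S g h x = (Fin.last (m + 1), (g.1 ⟨x, hx⟩).2) := by simp [glue, hx]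

lemma glue_not_mem {g h} {x : α} (hx : x ∉ S) :
    glue m S g h x = ((h.1 ⟨x, hx⟩).1.castSucc, (h.1 ⟨x, hx⟩).2) := by simp [glue, hx]

def splitFiberEquiv (m : ℕ) (S : Finset α) :
    { f : BPAFun (m + 1) α // secLast m f = S } ≃
      BPAFun 0 { x : α // x ∈ S } × BPAFun m { x : α // x ∉ S } where
  toFun f :=
    ⟨⟨fun x => (0, (f.1.1 x.1).2), by
        intro x r hr
        obtain ⟨y, hy1, hy2⟩ := f.1.2 x.1 r hr
        have hyS : y ∈ S := by
          rw [← f.2, mem_secLast, hy1]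
          exact secLast_eq_last f.2 x.2
        exact ⟨⟨y, hyS⟩, fin_one_eq _ _, hy2⟩⟩,
     ⟨fun x => ((f.1.1 x.1).1.castPred (secLast_ne_last f.2 x.2), (f.1.1 x.1).2), by
        intro x r hr
        obtain ⟨y, hy1, hy2⟩ := f.1.2 x.1 r hr
        have hyS : y ∉ S := by
          rw [← f.2, mem_secLast, hy1]
          exact secLast_ne_last f.2 x.2
        refine ⟨⟨y, hyS⟩, ?_, hy2⟩
        apply Fin.ext
        simpa using congrArg Fin.val hy1⟩⟩
  invFun gh :=
    ⟨⟨glue m S gh.1 gh.2, by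
      intro x r hr
      by_cases hx : x ∈ S
      · rw [glue_mem hx] at hr ⊢
        obtain ⟨y, _, hy2⟩ := gh.1.2 ⟨x, hx⟩ r hr
        exact ⟨y.1, by simp [glue_mem y.2, glue_mem hx], by simp [glue_mem y.2, hy2]⟩
      · rw [glue_not_mem hx] at hr ⊢
        obtain ⟨y, hy1, hy2⟩ := gh.2.2 ⟨x, hx⟩ r hr
        refine ⟨y.1, ?_, ?_⟩
        · simp only [glue_not_mem y.2, glue_not_mem hx]
          exact congrArg Fin.castSucc hy1
        · simp [glue_not_mem y.2, hy2]⟩, by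
      ext x
      refine mem_secLast.trans ?_
      by_cases hx : x ∈ S
      · simp [glue_mem hx, hx]
      · simp only [glue_not_mem hx, hx, iff_false]
        exact Fin.ne_of_lt (Fin.castSucc_lt_last _)⟩
  left_inv f := by
    apply Subtype.ext; apply Subtype.ext; funext x
    show glue m S _ _ x = f.1.1 x
    by_cases hx : x ∈ S
    · rw [glue_mem hx]
      exact Prod.ext (secLast_eq_last f.2 hx).symm rfl
    · rw [glue_not_mem hx]
      exact Prod.ext (Fin.castSucc_castPred _ (secLast_ne_last f.2 hx)) rfl
  right_inv gh := by
    refine Prod.ext ?_ ?_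
    · apply Subtype.ext; funext x
      simp only [glue_mem x.2]
      exact Prod.ext (fin_one_eq _ _) rfl
    · apply Subtype.ext; funext x
      simp only [glue_not_mem x.2]
      exact Prod.ext (by simp) rfl

end Split

section Strip

variable [Fintype α] [DecidableEq α] {S : Finset α}

/-- the first block (elements of rank 0) of a preferential arrangement -/
def blk0 (f : BPAFun 0 α) : Finset α := univ.filter (fun x => (f.1 x).2 = 0)

omit [DecidableEq α] in
lemma mem_blk0 {f : BPAFun 0 α} {x : α} : x ∈ blk0 f ↔ (f.1 x).2 = 0 := by simp [blk0]

omit [Fintype α] [DecidableEq α] in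
lemma blk0_nonempty [Fintype α] [DecidableEq α] [Nonempty α] (f : BPAFun 0 α) :
    (blk0 f).Nonempty := by
  obtain ⟨x⟩ := ‹Nonempty α›
  rcases Nat.eq_zero_or_pos (f.1 x).2 with h | h
  · exact ⟨x, mem_blk0.mpr h⟩
  · obtain ⟨y, _, hy2⟩ := f.2 x 0 h
    exact ⟨y, mem_blk0.mpr hy2⟩

lemma fiber_empty_isEmpty [Nonempty α] : IsEmpty { f : BPAFun 0 α // blk0 f = (∅ : Finset α) } := by
  refine ⟨fun f => ?_⟩
  have h := blk0_nonempty f.1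
  rw [f.2] at h
  exact absurd h (by simp)

variable (S) in
def unglue0 (f : α → Fin 1 × ℕ) : { x : α // x ∉ S } → Fin 1 × ℕ := fun x => (0, (f x.1).2 - 1)

variable (S) in
def glue0 (h : { x : α // x ∉ S } → Fin 1 × ℕ) : α → Fin 1 × ℕ := fun x =>
  if hx : x ∈ S then (0, 0) else (0, (h ⟨x, hx⟩).2 + 1)

lemma glue0_mem {h} {x : α} (hx : x ∈ S) : glue0 S h x = (0, 0) := by simp [glue0, hx]

lemma glue0_not_mem {h} {x : α} (hx : x ∉ S) :
    glue0 S h x = (0, (h ⟨x, hx⟩).2 + 1) := by simp [glue0, hx]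

def stripFiberEquiv (S : Finset α) (hS : S.Nonempty) :
    { f : BPAFun 0 α // blk0 f = S } ≃ BPAFun 0 { x : α // x ∉ S } where
  toFun f := ⟨unglue0 S f.1.1, by
    intro x r hr
    have hx0 : (f.1.1 x.1).2 ≠ 0 := fun h => x.2 ((Finset.ext_iff.mp f.2 _).mp (mem_blk0.mpr h))
    have hr' : r + 1 < (f.1.1 x.1).2 := by
      have : (unglue0 S f.1.1 x).2 = (f.1.1 x.1).2 - 1 := rfl
      omega
    obtain ⟨y, _, hy2⟩ := f.1.2 x.1 (r + 1) hr'
    have hyS : y ∉ S := fun h => by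
      have : (f.1.1 y).2 = 0 := mem_blk0.mp ((Finset.ext_iff.mp f.2 _).mpr h)
      omega
    refine ⟨⟨y, hyS⟩, fin_one_eq _ _, ?_⟩
    show (f.1.1 y).2 - 1 = r
    omega⟩
  invFun h := ⟨⟨glue0 S h.1, by
      intro x r hr
      by_cases hx : x ∈ S
      · rw [glue0_mem hx] at hr; omega
      · rw [glue0_not_mem hx] at hr
        rcases Nat.eq_zero_or_pos r with hr0 | hr0
        · obtain ⟨s, hs⟩ := hS
          exact ⟨s, fin_one_eq _ _, by rw [glue0_mem hs, hr0]⟩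
        · obtain ⟨y, _, hy2⟩ := h.2 ⟨x, hx⟩ (r - 1) (by omega)
          exact ⟨y.1, fin_one_eq _ _, by rw [glue0_not_mem y.2]; show (h.1 y).2 + 1 = r; omega⟩⟩, by
    ext x
    refine mem_blk0.trans ?_
    by_cases hx : x ∈ S
    · simp [glue0_mem hx, hx]
    · simp [glue0_not_mem hx, hx]⟩
  left_inv f := by
    apply Subtype.ext; apply Subtype.ext; funext x
    show glue0 S _ x = f.1.1 x
    by_cases hx : x ∈ S
    · rw [glue0_mem hx]
      have : (f.1.1 x).2 = 0 := mem_blk0.mp ((Finset.ext_iff.mp f.2 _).mpr hx)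
      exact Prod.ext (fin_one_eq _ _) this.symm
    · rw [glue0_not_mem hx]
      have hx0 : (f.1.1 x).2 ≠ 0 := fun h => hx ((Finset.ext_iff.mp f.2 _).mp (mem_blk0.mpr h))
      refine Prod.ext (fin_one_eq _ _) ?_
      show (f.1.1 x).2 - 1 + 1 = (f.1.1 x).2
      omega
  right_inv h := by
    apply Subtype.ext; funext x
    show unglue0 S (glue0 S h.1) x = h.1 x
    refine Prod.ext (fin_one_eq _ _) ?_
    show (glue0 S h.1 x.1).2 - 1 = (h.1 x).2
    rw [glue0_not_mem x.2]
    simp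

end Strip

lemma nat_card_sigma {ι : Type*} [Fintype ι] {f : ι → Type*} [∀ i, Finite (f i)] :
    Nat.card (Σ i, f i) = ∑ i, Nat.card (f i) := by
  classical
  letI : ∀ i, Fintype (f i) := fun i => Fintype.ofFinite _
  simp [Nat.card_eq_fintype_card]

lemma sum_finset_card {M : Type*} [AddCommMonoid M] (n : ℕ) (g : ℕ → M) :
    ∑ S : Finset (Fin n), g S.card = ∑ k ∈ range (n + 1), n.choose k • g k := by
  classical
  rw [← Finset.powerset_univ, ← Fintype.card_fin n]
  rw [Finset.sum_powerset_apply_card]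
  simp

lemma bpa_succ_rec (m n : ℕ) :
    bpa (m + 1) n = ∑ k ∈ range (n + 1), n.choose k * (bpa 0 k * bpa m (n - k)) := by
  classical
  rw [bpa_eq_natCard]
  rw [← Nat.card_congr (Equiv.sigmaFiberEquiv (secLast (α := Fin n) m))]
  rw [nat_card_sigma]
  have h : ∀ S : Finset (Fin n),
      Nat.card { f : BPAFun (m + 1) (Fin n) // secLast m f = S } =
        bpa 0 S.card * bpa m (n - S.card) := by
    intro S
    rw [Nat.card_congr (splitFiberEquiv m S), Nat.card_prod, natCard_BPAFun, natCard_BPAFun]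
    congr 2
    · simp
    · rw [Fintype.card_subtype_compl]
      simp
  calc ∑ S : Finset (Fin n), Nat.card { f : BPAFun (m + 1) (Fin n) // secLast m f = S }
      = ∑ S : Finset (Fin n), (fun k => bpa 0 k * bpa m (n - k)) S.card := by
        exact Finset.sum_congr rfl fun S _ => h S
    _ = _ := by
        rw [sum_finset_card n (fun k => bpa 0 k * bpa m (n - k))]; simp [smul_eq_mul]

lemma bpa0_rec (n : ℕ) :
    bpa 0 (n + 1) =
      ∑ k ∈ range (n + 2), (n + 1).choose k * (if k = 0 then 0 else bpa 0 (n + 1 - k)) := by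
  classical
  rw [bpa_eq_natCard]
  rw [← Nat.card_congr (Equiv.sigmaFiberEquiv (blk0 (α := Fin (n + 1))))]
  rw [nat_card_sigma]
  have h : ∀ S : Finset (Fin (n + 1)),
      Nat.card { f : BPAFun 0 (Fin (n + 1)) // blk0 f = S } =
        (fun k => if k = 0 then 0 else bpa 0 (n + 1 - k)) S.card := by
    intro S
    rcases eq_or_ne S ∅ with rfl | hS
    · haveI := fiber_empty_isEmpty (α := Fin (n + 1))
      simp [Nat.card_of_isEmpty]
    · have hS' : S.Nonempty := Finset.nonempty_of_ne_empty hS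
      rw [Nat.card_congr (stripFiberEquiv S hS'), natCard_BPAFun]
      have hc : S.card ≠ 0 := by simpa [Finset.card_eq_zero] using hS
      simp only [hc, if_neg]
      rw [Fintype.card_subtype_compl]
      simp
  calc ∑ S : Finset (Fin (n + 1)), Nat.card { f : BPAFun 0 (Fin (n + 1)) // blk0 f = S }
      = ∑ S : Finset (Fin (n + 1)),
          (fun k => if k = 0 then 0 else bpa 0 (n + 1 - k)) S.card := by
        exact Finset.sum_congr rfl fun S _ => h S
    _ = _ := by
        rw [sum_finset_card (n + 1) (fun k => if k = 0 then 0 else bpa 0 (n + 1 - k))]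
        simp [smul_eq_mul]

end Comb

section Analysis

lemma log2_pos : 0 < Real.log 2 := Real.log_pos one_lt_two

lemma sum_Ico_exp_le {x : ℝ} (hx : 0 ≤ x) (n : ℕ) :
    ∑ k ∈ Ico 1 n, x ^ k / (Nat.factorial k : ℝ) ≤ Real.exp x - 1 := by
  rcases Nat.eq_zero_or_pos n with rfl | hn
  · simpa using Real.one_le_exp hx
  · have h := Real.sum_le_exp_of_nonneg hx n
    rw [range_eq_Ico, Finset.sum_eq_sum_Ico_succ_bot hn] at h
    simp only [pow_zero, Nat.factorial_zero, Nat.cast_one, div_one, zero_add] at h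
    linarith

lemma bpa0_bound : ∀ n : ℕ, (bpa 0 n : ℝ) ≤ (Real.log 2)⁻¹ ^ n * (Nat.factorial n : ℝ) := by
  intro n
  induction n using Nat.strong_induction_on with
  | _ n ih =>
    match n with
    | 0 => simp [bpa_zero_right]
    | (n + 1) =>
      have hL : (0:ℝ) < Real.log 2 := log2_pos
      set L := Real.log 2 with hLdef
      set c := L⁻¹ with hcdef
      have hc0 : (0:ℝ) < c := inv_pos.mpr hL
      rw [bpa0_rec]
      push_cast
      have key : ∀ k ∈ range (n + 2),
          (((n+1).choose k : ℝ) * (if k = 0 then (0:ℝ) else (bpa 0 (n + 1 - k) : ℝ)))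
            ≤ (if k = 0 then (0:ℝ)
                else ((n+1).factorial : ℝ) * c ^ (n+1) * (L ^ k / (Nat.factorial k : ℝ))) := by
        intro k hk
        rcases eq_or_ne k 0 with rfl | hk0
        · simp
        · simp only [if_neg hk0]
          have hkn : k ≤ n + 1 := by simp only [Finset.mem_range] at hk; omega
          have hb := ih (n + 1 - k) (by omega)
          have h1 : ((n+1).choose k : ℝ) * (bpa 0 (n+1-k) : ℝ)
              ≤ ((n+1).choose k : ℝ) * (c ^ (n+1-k) * ((n+1-k).factorial : ℝ)) :=
            mul_le_mul_of_nonneg_left hb (by positivity)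
          refine h1.trans (le_of_eq ?_)
          have hck : c ^ (n + 1 - k) = c ^ (n+1) * L ^ k := by
            have h2 : c ^ (n + 1 - k) * c ^ k = c ^ (n + 1) := by
              rw [← pow_add]; congr 1; omega
            have hLc : L ^ k = (c ^ k)⁻¹ := by
              rw [inv_pow, inv_inv]
            rw [hLc, eq_comm, mul_inv_eq_iff_eq_mul₀ (pow_ne_zero _ hc0.ne')]
            exact h2.symm
          rw [Nat.cast_choose ℝ hkn, hck]
          have hf1 : ((Nat.factorial k : ℕ) : ℝ) ≠ 0 :=
            Nat.cast_ne_zero.mpr (Nat.factorial_ne_zero _)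
          have hf2 : ((Nat.factorial (n+1-k) : ℕ) : ℝ) ≠ 0 :=
            Nat.cast_ne_zero.mpr (Nat.factorial_ne_zero _)
          field_simp
      have hsum := Finset.sum_le_sum key
      refine le_trans (by exact_mod_cast hsum) ?_
      have hrw : ∑ k ∈ range (n + 2),
          (if k = 0 then (0:ℝ)
            else ((n+1).factorial : ℝ) * c ^ (n+1) * (L ^ k / (Nat.factorial k : ℝ)))
          = ((n+1).factorial : ℝ) * c ^ (n+1) *
              ∑ k ∈ Ico 1 (n + 2), L ^ k / (Nat.factorial k : ℝ) := by
        rw [range_eq_Ico, Finset.sum_eq_sum_Ico_succ_bot (by omega)]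
        rw [if_pos rfl, zero_add, Finset.mul_sum]
        refine Finset.sum_congr rfl fun k hk => ?_
        have : k ≠ 0 := by simp only [Finset.mem_Ico] at hk; omega
        rw [if_neg this]
      rw [hrw]
      have hle : ∑ k ∈ Ico 1 (n + 2), L ^ k / (Nat.factorial k : ℝ) ≤ 1 := by
        have := sum_Ico_exp_le hL.le (n + 2)
        rwa [hLdef, Real.exp_log two_pos, show (2:ℝ) - 1 = 1 by norm_num] at this
      calc ((n+1).factorial : ℝ) * c ^ (n+1) * ∑ k ∈ Ico 1 (n + 2), L ^ k / (Nat.factorial k : ℝ)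
          ≤ ((n+1).factorial : ℝ) * c ^ (n+1) * 1 :=
            mul_le_mul_of_nonneg_left hle (by positivity)
        _ = c ^ (n+1) * ((n+1).factorial : ℝ) := by ring
        _ = c ^ (n+1) * (((n+1).factorial : ℕ) : ℝ) := by norm_num

lemma bpa_bound (m : ℕ) : ∀ n : ℕ,
    (bpa m n : ℝ) ≤ ((n:ℝ)+1) ^ m * ((Real.log 2)⁻¹ ^ n * (Nat.factorial n : ℝ)) := by
  induction m with
  | zero => intro n; simpa using bpa0_bound n
  | succ m ih =>
    intro n
    have hL : (0:ℝ) < Real.log 2 := log2_pos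
    set c := (Real.log 2)⁻¹ with hcdef
    have hc0 : (0:ℝ) < c := inv_pos.mpr hL
    rw [bpa_succ_rec]
    push_cast
    have key : ∀ k ∈ range (n + 1),
        (n.choose k : ℝ) * ((bpa 0 k : ℝ) * (bpa m (n - k) : ℝ))
          ≤ (Nat.factorial n : ℝ) * c ^ n * ((n:ℝ)+1) ^ m := by
      intro k hk
      have hkn : k ≤ n := by simp only [Finset.mem_range] at hk; omega
      have h1 : (bpa 0 k : ℝ) * (bpa m (n - k) : ℝ)
          ≤ (c ^ k * (Nat.factorial k : ℝ)) *
              ((((n-k):ℕ):ℝ)+1) ^ m * (c ^ (n-k) * (Nat.factorial (n-k) : ℝ)) := by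
        have hb1 := bpa0_bound k
        have hb2 := ih (n - k)
        calc (bpa 0 k : ℝ) * (bpa m (n - k) : ℝ)
            ≤ (c ^ k * (Nat.factorial k : ℝ)) * (bpa m (n - k) : ℝ) :=
              mul_le_mul_of_nonneg_right hb1 (Nat.cast_nonneg _)
          _ ≤ (c ^ k * (Nat.factorial k : ℝ)) *
              (((((n-k):ℕ):ℝ)+1) ^ m * (c ^ (n-k) * (Nat.factorial (n-k) : ℝ))) :=
              mul_le_mul_of_nonneg_left hb2 (by positivity)
          _ = _ := by ring
      have h2 : (n.choose k : ℝ) * ((bpa 0 k : ℝ) * (bpa m (n - k) : ℝ))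
          ≤ (n.choose k : ℝ) * ((c ^ k * (Nat.factorial k : ℝ)) *
              ((((n-k):ℕ):ℝ)+1) ^ m * (c ^ (n-k) * (Nat.factorial (n-k) : ℝ))) :=
        mul_le_mul_of_nonneg_left h1 (Nat.cast_nonneg _)
      refine h2.trans ?_
      have hfact : (n.choose k : ℝ) * (Nat.factorial k : ℝ) * (Nat.factorial (n-k) : ℝ)
          = (Nat.factorial n : ℝ) := by
        exact_mod_cast congrArg (fun x : ℕ => (x : ℝ))
          (Nat.choose_mul_factorial_mul_factorial hkn)
      have hpow : c ^ k * c ^ (n-k) = c ^ n := by rw [← pow_add]; congr 1; omega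
      have hmono : ((((n-k):ℕ):ℝ)+1) ^ m ≤ ((n:ℝ)+1) ^ m := by
        apply pow_le_pow_left₀ (by positivity)
        have : ((n-k : ℕ) : ℝ) ≤ (n : ℝ) := by exact_mod_cast Nat.sub_le n k
        linarith
      calc (n.choose k : ℝ) * ((c ^ k * (Nat.factorial k : ℝ)) *
              ((((n-k):ℕ):ℝ)+1) ^ m * (c ^ (n-k) * (Nat.factorial (n-k) : ℝ)))
          = ((n.choose k : ℝ) * (Nat.factorial k : ℝ) * (Nat.factorial (n-k) : ℝ)) *
              (c ^ k * c ^ (n-k)) * ((((n-k):ℕ):ℝ)+1) ^ m := by ring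
        _ = (Nat.factorial n : ℝ) * c ^ n * ((((n-k):ℕ):ℝ)+1) ^ m := by rw [hfact, hpow]
        _ ≤ (Nat.factorial n : ℝ) * c ^ n * ((n:ℝ)+1) ^ m :=
            mul_le_mul_of_nonneg_left hmono (by positivity)
    have hsum := Finset.sum_le_sum key
    rw [Finset.sum_const, Finset.card_range, nsmul_eq_mul] at hsum
    refine le_trans (by exact_mod_cast hsum) (le_of_eq ?_)
    push_cast
    ring

end Analysis

section Main

lemma summable_pow_mul_geom (m : ℕ) {q : ℝ} (hq0 : 0 ≤ q) (hq : q < 1) :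
    Summable (fun n : ℕ => ((n : ℝ) + 1) ^ m * q ^ n) := by
  have h : ∀ n : ℕ, ((n:ℝ)+1) ^ m * q ^ n
      = ∑ j ∈ range (m+1), ((m.choose j : ℝ) * ((n:ℝ) ^ j * q ^ n)) := by
    intro n
    rw [add_pow, Finset.sum_mul]
    exact Finset.sum_congr rfl fun j _ => by ring
  refine Summable.congr (summable_sum (s := range (m+1)) fun j _ => ?_) (fun n => (h n).symm)
  exact (summable_pow_mul_geometric_of_norm_lt_one (R := ℝ) j
    (by rwa [Real.norm_eq_abs, abs_of_nonneg hq0])).mul_left _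

lemma norm_term (m n : ℕ) (z : ℂ) :
    ‖(bpa m n : ℂ) * z ^ n / (Nat.factorial n : ℂ)‖
      = (bpa m n : ℝ) * ‖z‖ ^ n / (Nat.factorial n : ℝ) := by
  simp [norm_div, norm_mul, norm_pow, Complex.norm_natCast]

lemma summable_norm_bpa (m : ℕ) {z : ℂ} (hz : ‖z‖ < Real.log 2) :
    Summable (fun n : ℕ => ‖(bpa m n : ℂ) * z ^ n / (Nat.factorial n : ℂ)‖) := by
  have hL : (0:ℝ) < Real.log 2 := log2_pos
  have ht0 : (0:ℝ) ≤ ‖z‖ := norm_nonneg z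
  refine Summable.of_nonneg_of_le (fun n => norm_nonneg _) (fun n => ?_)
    (summable_pow_mul_geom m (q := ‖z‖ / Real.log 2) (by positivity)
      ((div_lt_one hL).mpr hz))
  rw [norm_term]
  have hb := bpa_bound m n
  have hfpos : (0:ℝ) < (Nat.factorial n : ℝ) := by
    exact_mod_cast Nat.factorial_pos n
  rw [div_le_iff₀ hfpos]
  have h1 : (bpa m n : ℝ) * ‖z‖ ^ n
      ≤ (((n:ℝ)+1) ^ m * ((Real.log 2)⁻¹ ^ n * (Nat.factorial n : ℝ))) * ‖z‖ ^ n :=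
    mul_le_mul_of_nonneg_right hb (by positivity)
  refine h1.trans (le_of_eq ?_)
  rw [div_pow, div_eq_mul_inv, ← inv_pow]
  ring

lemma two_sub_exp_ne_zero {z : ℂ} (hz : ‖z‖ < Real.log 2) :
    (2 : ℂ) - Complex.exp z ≠ 0 := by
  have habs : ‖Complex.exp z‖ < 2 := by
    rw [Complex.norm_exp]
    calc Real.exp z.re ≤ Real.exp (‖z‖) :=
          Real.exp_le_exp.mpr (Complex.re_le_norm z)
      _ < Real.exp (Real.log 2) := Real.exp_lt_exp.mpr hz
      _ = 2 := Real.exp_log two_pos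
  intro h
  have : Complex.exp z = 2 := by linear_combination -h
  rw [this] at habs
  simp at habs

lemma bpa0_hasSum {z : ℂ} (hz : ‖z‖ < Real.log 2) :
    HasSum (fun n : ℕ => (bpa 0 n : ℂ) * z ^ n / (Nat.factorial n : ℂ))
      (1 / (2 - Complex.exp z)) := by
  have h2 := two_sub_exp_ne_zero hz
  set f0 : ℕ → ℂ := fun n => (bpa 0 n : ℂ) * z ^ n / (Nat.factorial n : ℂ) with hf0
  have hs := summable_norm_bpa 0 hz
  have hF : HasSum f0 (∑' n, f0 n) := hs.of_norm.hasSum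
  set F := ∑' n, f0 n with hFdef
  -- exp series
  have hexp : HasSum (fun n : ℕ => z ^ n / (Nat.factorial n : ℂ)) (Complex.exp z) := by
    rw [Complex.exp_eq_exp_ℂ]
    exact NormedSpace.expSeries_div_hasSum_exp z
  set a : ℕ → ℂ := fun n => if n = 0 then 0 else z ^ n / (Nat.factorial n : ℂ) with ha_def
  have hone : HasSum (fun n : ℕ => if n = 0 then (1:ℂ) else 0) 1 := hasSum_ite_eq 0 1
  have ha : HasSum a (Complex.exp z - 1) := by
    have h := hexp.sub hone
    refine h.congr_fun fun n => ?_
    by_cases hn : n = 0 <;> simp [ha_def, hn, Nat.factorial]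
  have ha_norm : Summable fun n => ‖a n‖ := by
    refine Summable.of_nonneg_of_le (fun n => norm_nonneg _) (fun n => ?_)
      (Real.summable_pow_div_factorial (‖z‖))
    by_cases hn : n = 0
    · simp [ha_def, hn]
    · simp only [ha_def, if_neg hn]
      rw [norm_div, norm_pow, Complex.norm_natCast]
  have hC := hasSum_sum_range_mul_of_summable_norm ha_norm hs
  rw [ha.tsum_eq, ← hFdef] at hC
  -- identify the Cauchy product termwise
  have hterm : ∀ n : ℕ, ∑ k ∈ range (n+1), a k * f0 (n - k)
      = f0 n - (if n = 0 then 1 else 0) := by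
    intro n
    match n with
    | 0 => simp [ha_def, hf0, bpa_zero_right]
    | (n+1) =>
      simp only [if_neg (Nat.succ_ne_zero n), sub_zero]
      rw [hf0]
      simp only
      rw [bpa0_rec]
      push_cast
      rw [Finset.sum_mul, Finset.sum_div]
      refine Finset.sum_congr rfl fun k hk => ?_
      rcases eq_or_ne k 0 with rfl | hk0
      · simp [ha_def]
      · have hkn : k ≤ n + 1 := by simp only [Finset.mem_range] at hk; omega
        simp only [ha_def, if_neg hk0]
        rw [Nat.cast_choose ℂ hkn]
        have hzpow : z ^ k * z ^ (n + 1 - k) = z ^ (n+1) := by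
          rw [← pow_add]; congr 1; omega
        have hf1 : ((Nat.factorial k : ℕ) : ℂ) ≠ 0 :=
          Nat.cast_ne_zero.mpr (Nat.factorial_ne_zero _)
        have hf2 : ((Nat.factorial (n+1-k) : ℕ) : ℂ) ≠ 0 :=
          Nat.cast_ne_zero.mpr (Nat.factorial_ne_zero _)
        have hf3 : ((Nat.factorial (n+1) : ℕ) : ℂ) ≠ 0 :=
          Nat.cast_ne_zero.mpr (Nat.factorial_ne_zero _)
        field_simp
        rw [← hzpow]
        ring
  have hC' : HasSum (fun n => f0 n - (if n = 0 then 1 else 0)) ((Complex.exp z - 1) * F) :=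
    hC.congr_fun (fun n => (hterm n).symm)
  have hD : HasSum (fun n => f0 n - (if n = 0 then 1 else 0)) (F - 1) := hF.sub hone
  have hFeq : (Complex.exp z - 1) * F = F - 1 := hC'.unique hD
  have hFval : F = 1 / (2 - Complex.exp z) := by
    rw [eq_div_iff h2]
    linear_combination -hFeq
  rw [← hFval]
  exact hF

theorem bpa_egf_aux (m : ℕ) (z : ℂ) (hz : ‖z‖ < Real.log 2) :
    HasSum (fun ℓ : ℕ => (bpa m ℓ : ℂ) * z ^ ℓ / (Nat.factorial ℓ : ℂ))
      (1 / (2 - Complex.exp z) ^ (m + 1)) := by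
  have h2 := two_sub_exp_ne_zero hz
  induction m with
  | zero => simpa using bpa0_hasSum hz
  | succ m ih =>
    have h0 := bpa0_hasSum hz
    have hC := hasSum_sum_range_mul_of_summable_norm (summable_norm_bpa 0 hz)
      (summable_norm_bpa m hz)
    rw [h0.tsum_eq, ih.tsum_eq] at hC
    have hterm : ∀ n : ℕ, ∑ k ∈ range (n+1),
        ((bpa 0 k : ℂ) * z ^ k / (Nat.factorial k : ℂ)) *
          ((bpa m (n-k) : ℂ) * z ^ (n-k) / (Nat.factorial (n-k) : ℂ))
        = (bpa (m+1) n : ℂ) * z ^ n / (Nat.factorial n : ℂ) := by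
      intro n
      rw [bpa_succ_rec]
      push_cast
      rw [Finset.sum_mul, Finset.sum_div]
      refine Finset.sum_congr rfl fun k hk => ?_
      have hkn : k ≤ n := by simp only [Finset.mem_range] at hk; omega
      rw [Nat.cast_choose ℂ hkn]
      have hzpow : z ^ k * z ^ (n - k) = z ^ n := by
        rw [← pow_add]; congr 1; omega
      have hf1 : ((Nat.factorial k : ℕ) : ℂ) ≠ 0 :=
        Nat.cast_ne_zero.mpr (Nat.factorial_ne_zero _)
      have hf2 : ((Nat.factorial (n-k) : ℕ) : ℂ) ≠ 0 :=
        Nat.cast_ne_zero.mpr (Nat.factorial_ne_zero _)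
      have hf3 : ((Nat.factorial n : ℕ) : ℂ) ≠ 0 :=
        Nat.cast_ne_zero.mpr (Nat.factorial_ne_zero _)
      field_simp
      rw [← hzpow]
      ring
    have hval : 1 / (2 - Complex.exp z) * (1 / (2 - Complex.exp z) ^ (m + 1))
        = 1 / (2 - Complex.exp z) ^ (m + 2) := by
      rw [div_mul_div_comm, one_mul, ← pow_succ']
    rw [hval] at hC
    exact hC.congr_fun (fun n => (hterm n).symm)

end Main


/-- For every `m ≥ 0` and every complex `z` with `|z| < log 2`, the series
`∑_{ℓ ≥ 0} r_{m,ℓ} · z^ℓ / ℓ!` converges, with sum `1 / (2 - e^z)^{m+1}`. -/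
theorem bpa_egf (m : ℕ) (z : ℂ) (hz : ‖z‖ < Real.log 2) :
    HasSum (fun ℓ : ℕ => (bpa m ℓ : ℂ) * z ^ ℓ / (Nat.factorial ℓ : ℂ))
      (1 / (2 - Complex.exp z) ^ (m + 1)) := by
  exact bpa_egf_aux m z hz
end
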